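/- Let S(z) = Σ_{k≥0} s_k z^k be the formal power series with s_0 = 1 satisfying the Mahler equation S(z^{16}) = −z S(z) + (1 + z + z^2) S(z^4). Then for all k ≥ 0: s_{4k} = s_{4k+1} = s_k, s_{4k+2} = 0, and s_{4k+3} = 0 if k ≡ 3 (mod 4) while s_{4k+3} = s_{k+1} otherwise. -/

import Mathlib

open PowerSeries

/-- `f(z^d)` as a formal power series. -/
noncomputable def substPow {R : Type*} [Semiring R] (d : ℕ) (f : PowerSeries R) :
    PowerSeries R :=
  PowerSeries.mk fun n => if d ∣ n then PowerSeries.coeff (n / d) f else 0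

/-- The Dilcher–Stolarsky series `S(z) = Σ s_k z^k`, with `s_0 = 1` and
`S(z^{16}) = −z S(z) + (1+z+z^2) S(z^4)`, has coefficients satisfying
`s_{4k} = s_{4k+1} = s_k`, `s_{4k+2} = 0`, and `s_{4k+3} = 0` if `k ≡ 3 (mod 4)`,
`s_{4k+3} = s_{k+1}` otherwise. -/
theorem dilcherStolarsky_coefficients
    (S : PowerSeries ℤ) (h0 : PowerSeries.coeff 0 S = 1)
    (hfe : substPow 16 S =
      -PowerSeries.X * S + (1 + PowerSeries.X + PowerSeries.X ^ 2) * substPow 4 S) :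
    ∀ k : ℕ,
      PowerSeries.coeff (4 * k) S = PowerSeries.coeff k S ∧
      PowerSeries.coeff (4 * k + 1) S = PowerSeries.coeff k S ∧
      PowerSeries.coeff (4 * k + 2) S = 0 ∧
      (if k % 4 = 3 then PowerSeries.coeff (4 * k + 3) S = 0
        else PowerSeries.coeff (4 * k + 3) S = PowerSeries.coeff (k + 1) S) := by
  have hsub : ∀ (d m : ℕ), PowerSeries.coeff m (substPow d S) =
      if d ∣ m then PowerSeries.coeff (m / d) S else 0 := by
    intro d m; simp [substPow]
  have key : ∀ n : ℕ,
      (if 16 ∣ n + 2 then PowerSeries.coeff ((n + 2) / 16) S else 0) =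
        -(PowerSeries.coeff (n + 1) S) +
        ((if 4 ∣ n + 2 then PowerSeries.coeff ((n + 2) / 4) S else 0) +
         (if 4 ∣ n + 1 then PowerSeries.coeff ((n + 1) / 4) S else 0) +
         (if 4 ∣ n then PowerSeries.coeff (n / 4) S else 0)) := by
    intro n
    have h := congrArg (PowerSeries.coeff (n + 2)) hfe
    have hexp : (1 + PowerSeries.X + PowerSeries.X ^ 2) * substPow 4 S =
        substPow 4 S + PowerSeries.X * substPow 4 S +
          PowerSeries.X ^ 2 * substPow 4 S := by ring
    rw [hexp, neg_mul] at h
    have h2 : PowerSeries.coeff (n + 2) (PowerSeries.X ^ 2 * substPow 4 S) =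
        PowerSeries.coeff n (substPow 4 S) := PowerSeries.coeff_X_pow_mul _ 2 n
    have h1 : PowerSeries.coeff (n + 2) (PowerSeries.X * substPow 4 S) =
        PowerSeries.coeff (n + 1) (substPow 4 S) :=
      PowerSeries.coeff_succ_X_mul _ _
    simp only [map_add, map_neg, PowerSeries.coeff_succ_X_mul, h2, h1, hsub] at h
    exact h
  have h4 : ∀ m : ℕ, PowerSeries.coeff (4 * m) S = PowerSeries.coeff m S := by
    intro m
    have h := key (4 * m + 1 - 2)
    rcases m with _ | m
    · simp
    · -- n + 2 = 4(m+1)+1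
      have := key (4 * (m + 1) - 1)
      have e1 : 4 * (m + 1) - 1 + 2 = 4 * (m + 1) + 1 := by omega
      have e2 : 4 * (m + 1) - 1 + 1 = 4 * (m + 1) := by omega
      rw [e1, e2] at this
      have d1 : ¬ 16 ∣ 4 * (m + 1) + 1 := by omega
      have d2 : ¬ 4 ∣ 4 * (m + 1) + 1 := by omega
      have d3 : 4 ∣ 4 * (m + 1) := ⟨m + 1, rfl⟩
      have d4 : ¬ 4 ∣ 4 * (m + 1) - 1 := by omega
      rw [if_neg d1, if_neg d2, if_pos d3, if_neg d4] at this
      have e3 : 4 * (m + 1) / 4 = m + 1 := by omega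
      rw [e3] at this
      linarith
  intro k
  have hA : PowerSeries.coeff (4 * k + 1) S = PowerSeries.coeff k S := by
    have := key (4 * k)
    have d1 : ¬ 16 ∣ 4 * k + 2 := by omega
    have d2 : ¬ 4 ∣ 4 * k + 2 := by omega
    have d3 : ¬ 4 ∣ 4 * k + 1 := by omega
    have d4 : 4 ∣ 4 * k := ⟨k, rfl⟩
    rw [if_neg d1, if_neg d2, if_neg d3, if_pos d4] at this
    have e : 4 * k / 4 = k := by omega
    rw [e] at this
    linarith
  have hB : PowerSeries.coeff (4 * k + 2) S = 0 := by
    have := key (4 * k + 1)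
    have d1 : ¬ 16 ∣ 4 * k + 1 + 2 := by omega
    have d2 : ¬ 4 ∣ 4 * k + 1 + 2 := by omega
    have d3 : ¬ 4 ∣ 4 * k + 1 + 1 := by omega
    have d4 : ¬ 4 ∣ 4 * k + 1 := by omega
    rw [if_neg d1, if_neg d2, if_neg d3, if_neg d4] at this
    linarith
  have hC : PowerSeries.coeff (4 * k + 3) S
      = PowerSeries.coeff (k + 1) S
        - (if 4 ∣ k + 1 then PowerSeries.coeff ((k + 1) / 4) S else 0) := by
    have := key (4 * k + 2)
    have e1 : 4 * k + 2 + 2 = 4 * (k + 1) := by omega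
    rw [e1] at this
    have d2 : ¬ 4 ∣ 4 * k + 2 + 1 := by omega
    have d3 : ¬ 4 ∣ 4 * k + 2 := by omega
    have d4 : 4 ∣ 4 * (k + 1) := ⟨k + 1, rfl⟩
    rw [if_neg d2, if_neg d3, if_pos d4] at this
    have e2 : 4 * (k + 1) / 4 = k + 1 := by omega
    rw [e2] at this
    by_cases h16 : 16 ∣ 4 * (k + 1)
    · have d16 : 4 ∣ k + 1 := by omega
      have e3 : 4 * (k + 1) / 16 = (k + 1) / 4 := by omega
      rw [if_pos h16, e3] at this
      rw [if_pos d16]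
      linarith
    · have d16 : ¬ 4 ∣ k + 1 := by omega
      rw [if_neg h16] at this
      rw [if_neg d16]
      linarith
  refine ⟨h4 k, hA, hB, ?_⟩
  by_cases hk : k % 4 = 3
  · rw [if_pos hk]
    have d : 4 ∣ k + 1 := by omega
    rw [hC, if_pos d]
    obtain ⟨j, hj⟩ := d
    have : (k + 1) / 4 = j := by omega
    rw [this, hj, h4 j]
    ring
  · rw [if_neg hk]
    have d : ¬ 4 ∣ k + 1 := by omega
    rw [hC, if_neg d]
    ring
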